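/- Let G be an MPDAG, and let p = <A1 = V0, V1, ..., Vk = Y1> (k > 1) be a shortest proper possibly causal path from A to Y in G starting with undirected edge A1 - V1. If p is shielded, then for some r with 2 <= r <= k, the directed edges A1 -> Vi are in G for all i in {2, ..., r}, and the path <A1, Vr> followed by p(Vr, Y1) is an unshielded possibly causal path in G. -/

import Mathlib

/-- A partially directed graph: directed edges `dir` and undirected edges `undir`. -/
structure PDAG (V : Type) where
  dir : V → V → Prop
  undir : V → V → Prop
  undir_symm : ∀ a b, undir a b → undir b a

namespace PDAG

variable {V : Type}

/-- Two nodes are adjacent if joined by a directed or undirected edge. -/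
def adj (G : PDAG V) (a b : V) : Prop := G.dir a b ∨ G.dir b a ∨ G.undir a b

/-- Each pair of nodes is joined by at most one edge, and no self loops. -/
def Wellformed (G : PDAG V) : Prop :=
  (∀ a b, ¬ (G.dir a b ∧ G.dir b a)) ∧ (∀ a b, ¬ (G.dir a b ∧ G.undir a b)) ∧
  (∀ a, ¬ G.undir a a)

/-- No directed cycles. -/
def Acyclic (G : PDAG V) : Prop := ∀ a, ¬ Relation.TransGen G.dir a a

/-- Closure under Meek's orientation rules R1–R4. -/
def MeekClosed (G : PDAG V) : Prop :=
  (∀ a b c, G.dir a b → G.undir b c → ¬ G.adj a c → G.dir b c) ∧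
  (∀ a b c, G.dir a c → G.dir c b → G.undir a b → G.dir a b) ∧
  (∀ a b c d, G.undir a b → G.undir a c → G.undir a d → G.dir c b → G.dir d b →
    ¬ G.adj c d → G.dir a b) ∧
  (∀ a b c d, G.undir d a → G.undir d b → G.undir d c → G.dir a b → G.dir b c →
    ¬ G.adj a c → G.dir d c)

/-- A maximally oriented PDAG. -/
def IsMPDAG (G : PDAG V) : Prop := G.Wellformed ∧ G.Acyclic ∧ G.MeekClosed

/-- A DAG: acyclic, no undirected edges. -/
def IsDAG (G : PDAG V) : Prop := G.Wellformed ∧ G.Acyclic ∧ ∀ a b, ¬ G.undir a b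

/-- A path: at least two distinct nodes, consecutive ones adjacent. -/
def IsPath (G : PDAG V) (p : List V) : Prop :=
  2 ≤ p.length ∧ p.Nodup ∧ List.Chain' G.adj p

/-- Possibly causal path: no edge `Vi ← Vj` in `G` for `i < j` among the path's nodes. -/
def PossiblyCausal (G : PDAG V) (p : List V) : Prop :=
  p.Pairwise (fun a b => ¬ G.dir b a)

/-- Causal path: every consecutive edge directed forwards. -/
def Causal (G : PDAG V) (p : List V) : Prop := List.Chain' G.dir p

/-- Unshielded path: endpoints of every consecutive triple are nonadjacent. -/
def Unshielded (G : PDAG V) (p : List V) : Prop :=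
  ∀ a b c, [a, b, c] <:+: p → ¬ G.adj a c

/-- Proper path w.r.t. `A`: only the first node is in `A`. -/
def ProperFrom (A : Set V) (p : List V) : Prop :=
  ∃ a t, p = a :: t ∧ a ∈ A ∧ ∀ x ∈ t, x ∉ A

/-- The path ends in the set `Y`. -/
def EndsIn (p : List V) (Y : Set V) : Prop := ∃ y, p.getLast? = some y ∧ y ∈ Y

/-- The path starts with an undirected edge. -/
def StartsUndir (G : PDAG V) (p : List V) : Prop :=
  ∃ a b t, p = a :: b :: t ∧ G.undir a b

/-- The path starts with a directed edge. -/
def StartsDir (G : PDAG V) (p : List V) : Prop :=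
  ∃ a b t, p = a :: b :: t ∧ G.dir a b

/-- A proper possibly causal path from `A` to `Y`. -/
def PPCPath (G : PDAG V) (A Y : Set V) (p : List V) : Prop :=
  G.IsPath p ∧ G.PossiblyCausal p ∧ ProperFrom A p ∧ EndsIn p Y

/-- Perković's identifiability condition: every proper possibly causal path from `A`
to `Y` starts with a directed edge. -/
def IdCond (G : PDAG V) (A Y : Set V) : Prop :=
  ∀ p, G.PPCPath A Y p → G.StartsDir p

/-- A violating path: proper possibly causal from `A` to `Y` starting with an
undirected edge. -/
def ViolPath (G : PDAG V) (A Y : Set V) (p : List V) : Prop :=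
  G.PPCPath A Y p ∧ G.StartsUndir p

/-- A shortest violating path. -/
def ShortestViol (G : PDAG V) (A Y : Set V) (p : List V) : Prop :=
  G.ViolPath A Y p ∧ ∀ q, G.ViolPath A Y q → p.length ≤ q.length

/-- Same adjacencies. -/
def SameAdj (G' G : PDAG V) : Prop := ∀ a b, G'.adj a b ↔ G.adj a b

/-- Same unshielded colliders. -/
def SameUC (G' G : PDAG V) : Prop :=
  ∀ a b c, (G'.dir a b ∧ G'.dir c b ∧ ¬ G'.adj a c) ↔
    (G.dir a b ∧ G.dir c b ∧ ¬ G.adj a c)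

/-- `G'` is represented by `G`: same adjacencies, same unshielded colliders, and
every directed edge of `G` appears in `G'`. -/
def RepresentedBy (G' G : PDAG V) : Prop :=
  SameAdj G' G ∧ SameUC G' G ∧ ∀ a b, G.dir a b → G'.dir a b

/-- `G1 = MPDAG(G, {A1 → V1})`: the least maximally oriented graph represented by `G`
containing the orientation `A1 → V1`. -/
def IsOrientClosure (G : PDAG V) (A1 V1 : V) (G1 : PDAG V) : Prop :=
  G1.IsMPDAG ∧ RepresentedBy G1 G ∧ G1.dir A1 V1 ∧
  (∀ a b, G1.undir a b ↔ (G.adj a b ∧ ¬ G1.dir a b ∧ ¬ G1.dir b a)) ∧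
  (∀ H : PDAG V, H.IsMPDAG → RepresentedBy H G → H.dir A1 V1 →
    ∀ a b, G1.dir a b → H.dir a b)

end PDAG

private lemma getLast?_append_cons {V : Type} (l : List V) (x : V) (m : List V) :
    (l ++ x :: m).getLast? = (x :: m).getLast? := by
  rw [List.getLast?_append]
  cases h : (x :: m).getLast? with
  | none => simp at h
  | some z => rfl

/-- If the path has an "interior shield" (a triple with adjacent endpoints not starting
at the head), then there is a shorter violating path: contradiction. -/
private lemma PDAG.no_shortcut {V : Type} {G : PDAG V} {A Y : Set V} {p : List V}
    {A1 V1 : V} {t : List V} (hpe : p = A1 :: V1 :: t)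
    (hshort : G.ShortestViol A Y p) {l' : List V} {a b c : V} {m : List V}
    (hdec : p = (A1 :: l') ++ a :: b :: c :: m) : ¬ G.adj a c := by
  intro hadj
  obtain ⟨⟨⟨hlen2, hnodup, hchain⟩, hpc, hproper, hends⟩, hstart⟩ := hshort.1
  obtain ⟨x, y, s, hx, hxy⟩ := hstart
  obtain ⟨rfl, rfl, rfl⟩ : A1 = x ∧ V1 = y ∧ t = s := by rw [hpe] at hx; simpa using hx
  have htail : V1 :: t = l' ++ a :: b :: c :: m := by
    rw [hpe] at hdec; simpa using hdec
  set p' : List V := (A1 :: l') ++ a :: c :: m with hp'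
  have hsub : List.Sublist p' p := by
    rw [hdec]
    exact List.Sublist.append_left
      (List.Sublist.cons₂ a (List.Sublist.cons b (List.Sublist.refl _))) _
  have hchain' : List.Chain' G.adj p' := by
    rw [hdec, List.Chain', List.isChain_append] at hchain
    obtain ⟨h1, h2, h3⟩ := hchain
    rw [List.isChain_cons_cons] at h2
    rw [List.isChain_cons_cons] at h2
    rw [hp', List.Chain', List.isChain_append]
    exact ⟨h1, List.isChain_cons_cons.mpr ⟨hadj, h2.2.2⟩, by simpa using h3⟩
  obtain ⟨a0, t0, heq, ha0, ht0⟩ := hproper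
  obtain ⟨rfl, rfl⟩ : A1 = a0 ∧ V1 :: t = t0 := by rw [hpe] at heq; simpa using heq
  have hviol : G.ViolPath A Y p' := by
    refine ⟨⟨⟨?_, hnodup.sublist hsub, hchain'⟩, hpc.sublist hsub, ?_, ?_⟩, ?_⟩
    · simp [hp']; omega
    · refine ⟨A1, l' ++ a :: c :: m, rfl, ha0, ?_⟩
      intro x hx
      apply ht0
      rw [htail]
      rcases List.mem_append.mp hx with h | h
      · exact List.mem_append.mpr (Or.inl h)
      · refine List.mem_append.mpr (Or.inr ?_)
        simp only [List.mem_cons] at h ⊢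
        tauto
    · obtain ⟨y0, hy0, hyY⟩ := hends
      refine ⟨y0, ?_, hyY⟩
      rw [hdec, getLast?_append_cons, List.getLast?_cons_cons, List.getLast?_cons_cons] at hy0
      rw [hp', getLast?_append_cons, List.getLast?_cons_cons]
      exact hy0
    · cases l' with
      | nil =>
        have ha : V1 = a := (by simpa using htail : V1 = a ∧ _).1
        exact ⟨A1, V1, c :: m, by simp [hp', ha], hxy⟩
      | cons v l'2 =>
        have hv : V1 = v := (by simpa using htail : V1 = v ∧ _).1
        exact ⟨A1, V1, l'2 ++ a :: c :: m, by simp [hp', hv], hxy⟩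
  have hle := hshort.2 p' hviol
  rw [hp', hdec] at hle
  simp at hle

/-- Any node adjacent to `A1` strictly after position 1 on the path must have
`A1 → w` (else a shorter violating path, or non-causality). -/
private lemma PDAG.adj_first {V : Type} {G : PDAG V} {A Y : Set V} {p : List V}
    {A1 V1 : V} {t : List V} (hpe : p = A1 :: V1 :: t)
    (hshort : G.ShortestViol A Y p) {l'' : List V} {w : V} {m : List V}
    (hdec : p = A1 :: V1 :: (l'' ++ w :: m)) (hadj : G.adj A1 w) : G.dir A1 w := by
  obtain ⟨⟨⟨hlen2, hnodup, hchain⟩, hpc, hproper, hends⟩, hstart⟩ := hshort.1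
  have htail : t = l'' ++ w :: m := by rw [hpe] at hdec; simpa using hdec
  have hnd : ∀ x ∈ V1 :: t, ¬ G.dir x A1 := by
    rw [hpe, PDAG.PossiblyCausal, List.pairwise_cons] at hpc
    exact fun x hx => hpc.1 x hx
  have hsubtail : List.Sublist (w :: m) (V1 :: t) := by
    rw [htail]; exact (List.sublist_append_right _ _).cons _
  have hwt : w ∈ V1 :: t := hsubtail.subset List.mem_cons_self
  rcases hadj with h | h | h
  · exact h
  · exact absurd h (hnd w hwt)
  · exfalso
    set p' : List V := A1 :: w :: m with hp'
    have hA1nt : A1 ∉ V1 :: t := by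
      rw [hpe, List.nodup_cons] at hnodup; exact hnodup.1
    have hnodt : (V1 :: t).Nodup := by
      rw [hpe, List.nodup_cons] at hnodup; exact hnodup.2
    have hdec2 : p = (A1 :: V1 :: l'') ++ w :: m := by rw [hdec]; simp
    have hchainwm : List.Chain' G.adj (w :: m) := by
      rw [hdec2, List.Chain', List.isChain_append] at hchain
      exact hchain.2.1
    obtain ⟨a0, t0, heq, ha0, ht0⟩ := hproper
    obtain ⟨rfl, rfl⟩ : A1 = a0 ∧ V1 :: t = t0 := by rw [hpe] at heq; simpa using heq
    have hviol : G.ViolPath A Y p' := by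
      refine ⟨⟨⟨by simp [hp'], ?_, ?_⟩, ?_, ?_, ?_⟩, ⟨A1, w, m, rfl, h⟩⟩
      · exact List.nodup_cons.mpr
          ⟨fun hm => hA1nt (hsubtail.subset hm), hnodt.sublist hsubtail⟩
      · exact List.isChain_cons_cons.mpr ⟨Or.inr (Or.inr h), hchainwm⟩
      · rw [hpe, PDAG.PossiblyCausal, List.pairwise_cons] at hpc
        exact List.pairwise_cons.mpr
          ⟨fun x hx => hnd x (hsubtail.subset hx), hpc.2.sublist hsubtail⟩
      · exact ⟨A1, w :: m, rfl, ha0, fun x hx => ht0 x (hsubtail.subset hx)⟩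
      · obtain ⟨y0, hy0, hyY⟩ := hends
        refine ⟨y0, ?_, hyY⟩
        rw [hdec2, getLast?_append_cons] at hy0
        rw [hp', List.getLast?_cons_cons]
        exact hy0
    have hle := hshort.2 p' hviol
    rw [hp', hdec] at hle
    simp at hle
    omega

/-- If `p = ⟨A1, V1, …, Vk = Y1⟩` (`k > 1`) is a shielded shortest proper possibly
causal path from `A` to `Y` in MPDAG `G` starting with the undirected edge
`A1 - V1`, then for some `2 ≤ r ≤ k`, `G` contains `A1 → Vi` for all `2 ≤ i ≤ r`,
and `⟨A1, Vr⟩ ⊕ p(Vr, Y1)` is an unshielded possibly causal path in `G`. -/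
theorem stmt8 {V : Type} (G : PDAG V) (hG : G.IsMPDAG) (A Y : Set V)
    (hAY : Disjoint A Y) (p : List V) (A1 V1 : V) (t : List V)
    (hpe : p = A1 :: V1 :: t) (hlen : 2 < p.length)
    (hshort : G.ShortestViol A Y p) (hsh : ¬ G.Unshielded p) :
    ∃ r, 2 ≤ r ∧ r ≤ p.length - 1 ∧
      (∀ i w, 2 ≤ i → i ≤ r → p[i]? = some w → G.dir A1 w) ∧
      G.IsPath (A1 :: p.drop r) ∧ G.Unshielded (A1 :: p.drop r) ∧
      G.PossiblyCausal (A1 :: p.drop r) := by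
  classical
  rcases t with _ | ⟨V2, t2⟩
  · rw [hpe] at hlen; simp at hlen
  obtain ⟨⟨⟨hlen2, hnodup, hchain⟩, hpc, hproper, hends⟩, hstart⟩ := hshort.1
  have hplen : p.length = t2.length + 3 := by rw [hpe]; simp
  have hndA1 : ∀ x ∈ V1 :: V2 :: t2, ¬ G.dir x A1 := by
    have hpc' := hpc
    rw [hpe, PDAG.PossiblyCausal, List.pairwise_cons] at hpc'
    exact fun x hx => hpc'.1 x hx
  have hA1nt : A1 ∉ V1 :: V2 :: t2 := by
    have h := hnodup
    rw [hpe, List.nodup_cons] at h; exact h.1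
  have hnodt : (V1 :: V2 :: t2).Nodup := by
    have h := hnodup
    rw [hpe, List.nodup_cons] at h; exact h.2
  -- Step 1: shieldedness forces `A1` adjacent to `V2`.
  have hadj2 : G.adj A1 V2 := by
    simp only [PDAG.Unshielded] at hsh
    push_neg at hsh
    obtain ⟨a, b, c, hinf, hac⟩ := hsh
    obtain ⟨s, u, hsu⟩ := hinf
    cases s with
    | nil =>
      obtain ⟨rfl, rfl, rfl, rfl⟩ : A1 = a ∧ V1 = b ∧ V2 = c ∧ t2 = u := by
        rw [hpe] at hsu; simpa using hsu.symm
      exact hac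
    | cons s0 s' =>
      exfalso
      simp only [List.cons_append] at hsu
      have hs0 : A1 = s0 := by
        have := hsu
        rw [hpe] at this
        exact ((by simpa using this.symm : A1 = s0 ∧ V1 :: V2 :: t2 = s' ++ a :: b :: c :: u)).1
      refine PDAG.no_shortcut hpe hshort (l' := s') (a := a) (b := b) (c := c) (m := u)
        ?_ hac
      rw [← hsu, ← hs0]; simp
  -- Step 2: find the largest initial run of adjacencies.
  set Q : ℕ → Prop := fun i => ∀ j, 2 ≤ j → j ≤ i → G.adj A1 (p.getD j A1) with hQ
  set r : ℕ := Nat.findGreatest Q (p.length - 1) with hrdef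
  have hk2 : 2 ≤ p.length - 1 := by omega
  have hQ2 : Q 2 := by
    intro j h2 hj
    have : j = 2 := le_antisymm hj h2
    subst this
    have : p.getD 2 A1 = V2 := by rw [hpe]; rfl
    rw [this]; exact hadj2
  have hr2 : 2 ≤ r := Nat.le_findGreatest hk2 hQ2
  have hrk : r ≤ p.length - 1 := Nat.findGreatest_le _
  have hQr : Q r := Nat.findGreatest_spec hk2 hQ2
  have hrlen : r < p.length := by omega
  -- the directed-edge property
  have hdir : ∀ j, 2 ≤ j → j ≤ r → ∀ hjlen : j < p.length, G.dir A1 (p[j]'hjlen) := by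
    intro j hj2 hjr hjlen
    have hadj : G.adj A1 (p[j]'hjlen) := by
      have := hQr j hj2 hjr
      rwa [List.getD_eq_getElem _ _ hjlen] at this
    obtain ⟨j', rfl⟩ : ∃ j', j = j' + 2 := ⟨j - 2, by omega⟩
    have htake : p.take (j' + 2) = A1 :: V1 :: (V2 :: t2).take j' := by
      rw [hpe]; simp
    have hsplit : p = A1 :: V1 :: ((V2 :: t2).take j' ++
        (p[j' + 2]'hjlen) :: p.drop (j' + 3)) := by
      conv_lhs => rw [← List.take_append_drop (j' + 2) p,
        List.drop_eq_getElem_cons hjlen]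
      rw [htake]; simp
    exact PDAG.adj_first hpe hshort hsplit hadj
  -- maximality
  have hmax : r < p.length - 1 → ¬ G.adj A1 (p.getD (r + 1) A1) := by
    intro hlt hadj
    have hng := Nat.findGreatest_is_greatest (P := Q) (Nat.lt_succ_self r) (by omega)
    apply hng
    intro j hj2 hjr
    rcases Nat.lt_or_ge j (r + 1) with h | h
    · exact hQr j hj2 (by omega)
    · have : j = r + 1 := by omega
      subst this; exact hadj
  -- facts about the tail
  have hdropr : p.drop r = (p[r]'hrlen) :: p.drop (r + 1) :=
    List.drop_eq_getElem_cons hrlen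
  have hadjr : G.adj A1 (p[r]'hrlen) := Or.inl (hdir r hr2 le_rfl hrlen)
  have hdrop1 : p.drop 1 = V1 :: V2 :: t2 := by rw [hpe]; rfl
  have hsubdrop : List.Sublist (p.drop r) (V1 :: V2 :: t2) := by
    have : p.drop r = (V1 :: V2 :: t2).drop (r - 1) := by
      rw [← hdrop1, List.drop_drop]
      congr 1; omega
    rw [this]; exact List.drop_sublist _ _
  have hchaindrop : List.Chain' G.adj (p.drop r) := by
    have h := hchain
    rw [← List.take_append_drop r p, List.Chain', List.isChain_append] at h
    exact h.2.1
  refine ⟨r, hr2, hrk, ?_, ⟨?_, ?_, ?_⟩, ?_, ?_⟩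
  · -- directed edges A1 → Vi
    intro i w h2 hir hw
    rw [List.getElem?_eq_some_iff] at hw
    obtain ⟨hi, rfl⟩ := hw
    exact hdir i h2 hir hi
  · -- length
    simp only [List.length_cons, List.length_drop]
    omega
  · -- nodup
    exact List.nodup_cons.mpr
      ⟨fun hm => hA1nt (hsubdrop.subset hm), hnodt.sublist hsubdrop⟩
  · -- chain
    refine List.isChain_cons.mpr ⟨?_, hchaindrop⟩
    intro y hy
    rw [List.head?_drop, List.getElem?_eq_getElem hrlen] at hy
    rw [Option.mem_def, Option.some_inj] at hy
    rw [← hy]; exact hadjr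
  · -- unshielded
    intro a b c hinf
    obtain ⟨s, u, hsu⟩ := hinf
    cases s with
    | nil =>
      have ha : a = A1 := by simpa using congrArg (·.head?) hsu
      have hbc : b :: c :: u = p.drop r := by simpa using congrArg (·.tail) hsu
      have hlendrop : p.length - r = u.length + 2 := by
        have := congrArg List.length hbc; simpa using this.symm
      have hlt : r < p.length - 1 := by omega
      have hc : p.getD (r + 1) A1 = c := by
        have h1 : (p.drop r)[1]? = some c := by rw [← hbc]; simp
        rw [List.getElem?_drop] at h1
        rw [List.getElem?_eq_some_iff] at h1
        obtain ⟨h, hc⟩ := h1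
        rw [List.getD_eq_getElem _ _ h]; exact hc
      rw [ha, ← hc]
      exact hmax hlt
    | cons s0 s' =>
      simp only [List.cons_append] at hsu
      have hs0 : s0 = A1 := by simpa using congrArg (·.head?) hsu
      have hdrop' : s' ++ a :: b :: c :: u = p.drop r := by
        simpa using congrArg (·.tail) hsu
      have htake : p.take r = A1 :: V1 :: (V2 :: t2).take (r - 2) := by
        rw [hpe, show r = (r - 2) + 2 by omega]; simp
      have hdec : p = (A1 :: (V1 :: (V2 :: t2).take (r - 2) ++ s')) ++
          a :: b :: c :: u := by
        conv_lhs => rw [← List.take_append_drop r p, htake, ← hdrop']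
        simp
      exact PDAG.no_shortcut hpe hshort hdec
  · -- possibly causal
    refine List.pairwise_cons.mpr ⟨fun x hx => hndA1 x (hsubdrop.subset hx), ?_⟩
    exact hpc.sublist (List.drop_sublist r p)
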